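/- For every n ≥ 1, if a vector ψ : {0,…,n} → ℂ satisfies Mⁿ(u,v)·ψ = ψ for all u, v ∈ ℂ with |u|² + |v|² = 1, then ψ = 0. That is, the representation Mⁿ of SU(2) has no nonzero invariant vector for n ≥ 1, so the only pure rotationally invariant states are those of total angular momentum zero. -/

import Mathlib

open Matrix Finset

/-- The polynomial parametrization `U^{(j)}` (with `j = n/2`, index `k = j - m`) of the
spin-`j` rotation matrix, as an `(n+1)×(n+1)` complex matrix depending on `u, v ∈ ℂ`. -/
noncomputable def Mrep (n : ℕ) (u v : ℂ) : Matrix (Fin (n + 1)) (Fin (n + 1)) ℂ :=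
  Matrix.of fun k' k =>
    (Real.sqrt ((n.choose (k : ℕ) : ℝ) / (n.choose (k' : ℕ) : ℝ)) : ℂ) *
      ∑ a ∈ Finset.Icc (max 0 ((k : ℕ) - (k' : ℕ))) (min (k : ℕ) (n - (k' : ℕ))),
        ((k : ℕ).choose a : ℂ) * ((n - (k : ℕ)).choose ((k' : ℕ) + a - (k : ℕ)) : ℂ) *
          (-1 : ℂ) ^ a * u ^ (n - (k' : ℕ) - a) * (starRingEnd ℂ u) ^ ((k : ℕ) - a) *
          v ^ ((k' : ℕ) + a - (k : ℕ)) * (starRingEnd ℂ v) ^ a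

lemma Mrep_v_zero (n : ℕ) (u : ℂ) (k j : Fin (n + 1)) :
    Mrep n u 0 k j =
      if j = k then u ^ (n - (k : ℕ)) * (starRingEnd ℂ u) ^ (k : ℕ) else 0 := by
  simp only [Mrep, Matrix.of_apply, map_zero]
  by_cases h : j = k
  · subst h
    rw [if_pos rfl, Finset.sum_eq_single 0]
    · rw [div_self (by exact_mod_cast (Nat.choose_pos (Nat.le_of_lt_succ j.2)).ne' :
        ((n.choose (j : ℕ) : ℝ)) ≠ 0), Real.sqrt_one]
      simp
    · intro a _ ha
      simp [zero_pow ha]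
    · intro h
      simp at h
  · rw [if_neg h]
    have hz : ∀ a ∈ Finset.Icc (max 0 ((j : ℕ) - (k : ℕ))) (min (j : ℕ) (n - (k : ℕ))),
        ((j : ℕ).choose a : ℂ) * ((n - (j : ℕ)).choose ((k : ℕ) + a - (j : ℕ)) : ℂ) *
          (-1 : ℂ) ^ a * u ^ (n - (k : ℕ) - a) * (starRingEnd ℂ u) ^ ((j : ℕ) - a) *
          (0 : ℂ) ^ ((k : ℕ) + a - (j : ℕ)) * (0 : ℂ) ^ a = 0 := by
      intro a ha
      rcases Nat.eq_zero_or_pos a with rfl | hpos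
      · simp only [Finset.mem_Icc, max_le_iff] at ha
        have hne : (j : ℕ) ≠ (k : ℕ) := fun he => h (Fin.ext he)
        have hjk : (j : ℕ) < (k : ℕ) := by omega
        rw [zero_pow (by omega : (k : ℕ) + 0 - (j : ℕ) ≠ 0)]
        ring
      · rw [zero_pow hpos.ne']
        ring
    rw [Finset.sum_eq_zero hz, mul_zero]

lemma Mrep_row_zero (n : ℕ) (u v : ℂ) (m : Fin (n + 1)) :
    Mrep n u v 0 m =
      (Real.sqrt (n.choose (m : ℕ)) : ℂ) *
        ((-1 : ℂ) ^ (m : ℕ) * u ^ (n - (m : ℕ)) * (starRingEnd ℂ v) ^ (m : ℕ)) := by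
  have hm : (m : ℕ) ≤ n := Nat.le_of_lt_succ m.2
  have h0 : ((0 : Fin (n + 1)) : ℕ) = 0 := rfl
  simp only [Mrep, Matrix.of_apply, h0, Nat.sub_zero, Nat.choose_zero_right]
  rw [max_eq_right (Nat.zero_le _),
    show min (m : ℕ) n = (m : ℕ) from min_eq_left hm, Finset.Icc_self,
    Finset.sum_singleton]
  simp [Nat.cast_one, div_one]

/-- For `n ≥ 1`, the representation `Mⁿ` of SU(2) has no nonzero invariant
vector: if `Mⁿ(u,v)·ψ = ψ` for all `(u,v)` with `|u|² + |v|² = 1`, then `ψ = 0`. -/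
theorem Mrep_no_invariant_vector (n : ℕ) (hn : 1 ≤ n) (ψ : Fin (n + 1) → ℂ)
    (hψ : ∀ u v : ℂ, ‖u‖ ^ 2 + ‖v‖ ^ 2 = 1 →
      (Mrep n u v).mulVec ψ = ψ) :
    ψ = 0 := by
  have step1 : ∀ k : Fin (n + 1), 2 * (k : ℕ) ≠ n → ψ k = 0 := by
    intro k hk
    have hkn : (k : ℕ) ≤ n := Nat.le_of_lt_succ k.2
    set mz : ℤ := (n : ℤ) - 2 * (k : ℕ) with hmzdef
    have hmz : mz ≠ 0 := by omega
    have hmzC : (mz : ℂ) ≠ 0 := by exact_mod_cast hmz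
    set r : ℝ := Real.pi / mz with hrdef
    set u : ℂ := Complex.exp ((r : ℂ) * Complex.I) with hudef
    have habs : ‖u‖ = 1 := by
      rw [hudef, Complex.norm_exp]
      simp
    have hcond : ‖u‖ ^ 2 + ‖(0 : ℂ)‖ ^ 2 = 1 := by
      simp [habs]
    have hthis := congrFun (hψ u 0 hcond) k
    rw [Matrix.mulVec, dotProduct] at hthis
    simp only [Mrep_v_zero, ite_mul, zero_mul, Finset.sum_ite_eq',
      Finset.mem_univ, if_true] at hthis
    have hconj : (starRingEnd ℂ) u = Complex.exp (-((r : ℂ) * Complex.I)) := by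
      rw [hudef, ← Complex.exp_conj]
      congr 1
      rw [_root_.map_mul, Complex.conj_ofReal, Complex.conj_I]
      ring
    rw [hconj, ← Complex.exp_nat_mul, ← Complex.exp_nat_mul, ← Complex.exp_add] at hthis
    have harg : ((n - (k : ℕ) : ℕ) : ℂ) * ((r : ℂ) * Complex.I) +
        ((k : ℕ) : ℂ) * -((r : ℂ) * Complex.I) = Real.pi * Complex.I := by
      have hcast : ((n - (k : ℕ) : ℕ) : ℂ) = (n : ℂ) - (k : ℕ) := by
        push_cast [Nat.cast_sub hkn]; ring
      have hr : (r : ℂ) = (Real.pi : ℂ) / (mz : ℂ) := by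
        rw [hrdef]; push_cast; ring
      have hmzc : (mz : ℂ) = (n : ℂ) - 2 * (k : ℕ) := by
        rw [hmzdef]; push_cast; ring
      rw [hcast, hr]
      have hstep : ((n : ℂ) - ((k : ℕ) : ℂ)) * ((Real.pi : ℂ) / (mz : ℂ) * Complex.I) +
          ((k : ℕ) : ℂ) * -((Real.pi : ℂ) / (mz : ℂ) * Complex.I) =
          (mz : ℂ) * ((Real.pi : ℂ) / (mz : ℂ)) * Complex.I := by
        rw [hmzc]; ring
      rw [hstep, mul_div_cancel₀ _ hmzC]
    rw [harg, Complex.exp_pi_mul_I] at hthis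
    linear_combination (-(1 : ℂ) / 2) * hthis
  funext k
  by_cases hk : 2 * (k : ℕ) = n
  · -- the middle component (only exists when n is even)
    have hkpos : 1 ≤ (k : ℕ) := by omega
    set r : ℝ := (Real.sqrt 2)⁻¹ with hrdef
    have hr2 : r ^ 2 = 2⁻¹ := by
      rw [hrdef, inv_pow, Real.sq_sqrt (by norm_num : (2:ℝ) ≥ 0)]
    have hrpos : 0 < r := by positivity
    have hcond : ‖(r : ℂ)‖ ^ 2 + ‖(r : ℂ)‖ ^ 2 = 1 := by
      rw [Complex.norm_real, Real.norm_eq_abs, abs_of_pos hrpos, hr2]; norm_num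
    have hthis := congrFun (hψ (r : ℂ) (r : ℂ) hcond) 0
    rw [Matrix.mulVec, dotProduct] at hthis
    rw [Finset.sum_eq_single k] at hthis
    · have h0 : ψ 0 = 0 := by
        apply step1
        simp; omega
      rw [h0, Mrep_row_zero] at hthis
      have hne : ((Real.sqrt (n.choose (k : ℕ)) : ℂ) *
          ((-1 : ℂ) ^ (k : ℕ) * (r : ℂ) ^ (n - (k : ℕ)) *
            (starRingEnd ℂ (r : ℂ)) ^ (k : ℕ))) ≠ 0 := by
        rw [Complex.conj_ofReal]
        have h1 : (Real.sqrt (n.choose (k : ℕ)) : ℂ) ≠ 0 := by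
          simp only [ne_eq, Complex.ofReal_eq_zero]
          refine (Real.sqrt_pos.2 ?_).ne'
          exact_mod_cast Nat.choose_pos (Nat.le_of_lt_succ k.2)
        have h2 : ((r : ℂ)) ≠ 0 := by
          simp only [ne_eq, Complex.ofReal_eq_zero]; exact hrpos.ne'
        exact mul_ne_zero h1 (mul_ne_zero (mul_ne_zero (pow_ne_zero _ (by norm_num))
          (pow_ne_zero _ h2)) (pow_ne_zero _ h2))
      exact (mul_eq_zero.1 hthis).resolve_left hne
    · intro j _ hj
      rw [step1 j (fun he => hj (Fin.ext (by omega))), mul_zero]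
    · intro h
      exact absurd (Finset.mem_univ k) h
  · rw [step1 k hk]; rfl
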